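/- Let p be an odd prime and let ζ ∈ ℤ_p be a primitive (p−1)-st root of unity. Let Φ_ζ be the ℚ_p-algebra endomorphism of V := ℚ_p[X]/(X^p) sending the class x of X to 1 − Σ_{n=0}^{p−1} C(ζ,n)(−x)^n. For 0 ≤ k ≤ p−2 let Λ_k := {g ∈ V : Φ_ζ(g) = ζ^k · g} be the ζ^k-eigenspace. Then V is the internal direct sum V = Λ_0 ⊕ Λ_1 ⊕ ⋯ ⊕ Λ_{p−2}, the eigenspace Λ_0 (eigenvalue 1) has ℚ_p-dimension 2, and each Λ_k for 1 ≤ k ≤ p−2 has ℚ_p-dimension 1. -/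
import Mathlib

open Polynomial Finset
set_option synthInstance.maxHeartbeats 1000000
set_option maxHeartbeats 1000000

lemma geom_aux {R : Type*} [CommRing R] (w : R) (q : ℕ) :
    (1 - w) * ∑ i ∈ range q, w ^ i = 1 - w ^ q := by
  linear_combination (-1 : R) * geom_sum_mul w q

lemma key_dvd (K : Type*) [Field K] [CharZero K] (m q : ℕ) :
    (X : K[X]) ^ (q + 1) ∣
      (∑ n ∈ range q, C (((n : K) + 1)⁻¹) * (1 - (1 - X) ^ m) ^ (n + 1))
        - C (m : K) * ∑ j ∈ range q, C (((j : K) + 1)⁻¹) * X ^ (j + 1) := by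
  rcases Nat.eq_zero_or_pos m with hm | hm
  · subst hm; simp
  set w : K[X] := 1 - (1 - X) ^ m with hw
  set f : K[X] := ∑ n ∈ range q, C (((n : K) + 1)⁻¹) * w ^ (n + 1) with hf
  set g : K[X] := ∑ j ∈ range q, C (((j : K) + 1)⁻¹) * X ^ (j + 1) with hg
  set h : K[X] := f - C (m : K) * g with hh
  have hne : ∀ n : ℕ, ((n : K) + 1) ≠ 0 := fun n => Nat.cast_add_one_ne_zero n
  have hw0 : w.coeff 0 = 0 := by simp [hw, coeff_zero_eq_eval_zero]
  have hXw : X ∣ w := X_dvd_iff.mpr hw0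
  have hdw : derivative w = C (m : K) * (1 - X) ^ (m - 1) := by
    rw [hw, derivative_sub, derivative_one, derivative_pow, derivative_sub, derivative_one,
      derivative_X]
    ring
  have hderf : derivative f = derivative w * ∑ i ∈ range q, w ^ i := by
    rw [hf, derivative_sum, Finset.mul_sum]
    refine Finset.sum_congr rfl fun n _ => ?_
    rw [derivative_mul, derivative_C, zero_mul, zero_add, derivative_pow]
    push_cast
    calc C (((n : K) + 1)⁻¹) * (C ((n : K) + 1) * w ^ n * derivative w)
        = C (((n : K) + 1)⁻¹ * ((n : K) + 1)) * (w ^ n * derivative w) := by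
          rw [C_mul]; ring
      _ = derivative w * w ^ n := by
          rw [inv_mul_cancel₀ (hne n), C_1, one_mul]; ring
  have hderg : derivative g = ∑ i ∈ range q, X ^ i := by
    rw [hg, derivative_sum]
    refine Finset.sum_congr rfl fun n _ => ?_
    rw [derivative_mul, derivative_C, zero_mul, zero_add, derivative_X_pow]
    push_cast
    calc C (((n : K) + 1)⁻¹) * (C ((n : K) + 1) * X ^ n)
        = C (((n : K) + 1)⁻¹ * ((n : K) + 1)) * X ^ n := by rw [C_mul]; ring
      _ = X ^ n := by rw [inv_mul_cancel₀ (hne n), C_1, one_mul]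
  have hkey : (1 - X) * derivative h = C (m : K) * (X ^ q - w ^ q) := by
    have h1X : (1 - X : K[X]) ^ m = (1 - X) * (1 - X) ^ (m - 1) := by
      conv_lhs => rw [show m = 1 + (m - 1) from by omega, pow_add, pow_one]
    have hwm : (1 : K[X]) - w = (1 - X) ^ m := by rw [hw]; ring
    have h1f : (1 - X) * derivative f = C (m : K) * (1 - w ^ q) := by
      rw [hderf, hdw, ← geom_aux w q, hwm, h1X]; ring
    have h1g : (1 - X) * derivative g = 1 - X ^ q := by
      rw [hderg, geom_aux]
    rw [hh, derivative_sub, derivative_mul, derivative_C, zero_mul, zero_add, mul_sub, h1f,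
      mul_left_comm, h1g]
    ring
  have hdvd : (X : K[X]) ^ q ∣ derivative h := by
    have h1 : (X : K[X]) ^ q ∣ (1 - X) * derivative h := by
      rw [hkey]
      exact Dvd.dvd.mul_left (dvd_sub (dvd_refl _) (pow_dvd_pow_of_dvd hXw q)) _
    have expand : derivative h
        = (∑ i ∈ range q, X ^ i) * ((1 - X) * derivative h) + X ^ q * derivative h := by
      linear_combination (- derivative h) * geom_aux (X : K[X]) q
    rw [expand]
    exact dvd_add (h1.mul_left _) (dvd_mul_right _ _)
  rw [X_pow_dvd_iff]
  intro d hd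
  rcases Nat.eq_zero_or_pos d with hd0 | hdpos
  · subst hd0
    rw [coeff_zero_eq_eval_zero, hh, eval_sub, eval_mul, eval_C]
    have hf0 : eval 0 f = 0 := by
      rw [hf, eval_finset_sum]
      exact Finset.sum_eq_zero fun n _ => by simp [hw]
    have hg0 : eval 0 g = 0 := by
      rw [hg, eval_finset_sum]
      exact Finset.sum_eq_zero fun n _ => by simp
    rw [hf0, hg0]; ring
  · have h2 : (derivative h).coeff (d - 1) = 0 := by
      rw [X_pow_dvd_iff] at hdvd
      exact hdvd _ (by omega)
    rw [coeff_derivative] at h2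
    have hd1 : d - 1 + 1 = d := by omega
    rw [hd1] at h2
    have hne' : ((d - 1 : ℕ) : K) + 1 ≠ 0 := hne _
    exact (mul_eq_zero.mp h2).resolve_right hne'


noncomputable def pbinom (p : ℕ) [Fact p.Prime] (y : ℚ_[p]) (n : ℕ) : ℚ_[p] :=
  (descPochhammer ℚ_[p] n).eval y / (n.factorial : ℚ_[p])

noncomputable abbrev TruncV (p : ℕ) [Fact p.Prime] : Type :=
  Polynomial ℚ_[p] ⧸ Ideal.span {(Polynomial.X : Polynomial ℚ_[p]) ^ p}

noncomputable def xV (p : ℕ) [Fact p.Prime] : TruncV p :=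
  Ideal.Quotient.mk _ Polynomial.X

noncomputable def phiImg (p : ℕ) [Fact p.Prime] (a : ℚ_[p]) : TruncV p :=
  1 - ∑ n ∈ Finset.range p, pbinom p a n • (-xV p) ^ n

variable (p : ℕ) [Fact p.Prime]

noncomputable def mkV : ℚ_[p][X] →+* TruncV p := Ideal.Quotient.mk _

lemma mkV_C (c : ℚ_[p]) : mkV p (C c) = algebraMap ℚ_[p] (TruncV p) c := rfl

lemma mkV_X : mkV p X = xV p := rfl

lemma mkV_C_mul (c : ℚ_[p]) (q : ℚ_[p][X]) : mkV p (C c * q) = c • mkV p q := by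
  rw [map_mul, mkV_C, ← Algebra.smul_def]

lemma xV_pow_p : (xV p) ^ p = 0 := by
  rw [xV, ← map_pow, Ideal.Quotient.eq_zero_iff_mem]
  exact Ideal.subset_span rfl

lemma pbinom_nat (m n : ℕ) : pbinom p (m : ℚ_[p]) n = (m.choose n : ℚ_[p]) := by
  rw [pbinom, descPochhammer_eval_eq_descFactorial, Nat.descFactorial_eq_factorial_mul_choose]
  have : (n.factorial : ℚ_[p]) ≠ 0 := Nat.cast_ne_zero.mpr n.factorial_ne_zero
  push_cast
  field_simp

lemma xV_pow_eq_zero {n : ℕ} (hn : p ≤ n) : (xV p) ^ n = 0 := by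
  rw [show n = p + (n - p) by omega, pow_add, xV_pow_p, zero_mul]

lemma neg_xV_pow_eq_zero {n : ℕ} (hn : p ≤ n) : (-xV p) ^ n = 0 := by
  rw [show (-xV p) = (-1 : TruncV p) * xV p by ring, mul_pow, xV_pow_eq_zero p hn, mul_zero]

lemma phiImg_nat (m : ℕ) : phiImg p (m : ℚ_[p]) = 1 - (1 - xV p) ^ m := by
  rw [phiImg]
  congr 1
  have h1 : ∑ n ∈ range p, pbinom p (m : ℚ_[p]) n • (-xV p) ^ n
      = ∑ n ∈ range p, (m.choose n : ℚ_[p]) • (-xV p) ^ n :=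
    Finset.sum_congr rfl fun n _ => by rw [pbinom_nat]
  rw [h1]
  have h2 : ∑ n ∈ range (max p (m+1)), (m.choose n : ℚ_[p]) • (-xV p) ^ n
      = ∑ n ∈ range p, (m.choose n : ℚ_[p]) • (-xV p) ^ n := by
    refine (Finset.sum_subset (Finset.range_subset_range.mpr (le_max_left _ _))
      fun n _ hn => ?_).symm
    have : p ≤ n := by simp only [Finset.mem_range, not_lt] at hn; exact hn
    rw [neg_xV_pow_eq_zero p this, smul_zero]
  have h3 : ∑ n ∈ range (max p (m+1)), (m.choose n : ℚ_[p]) • (-xV p) ^ n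
      = ∑ n ∈ range (m+1), (m.choose n : ℚ_[p]) • (-xV p) ^ n := by
    refine (Finset.sum_subset (Finset.range_subset_range.mpr (le_max_right _ _))
      fun n _ hn => ?_).symm
    have : m < n := by simp only [Finset.mem_range, not_lt] at hn; omega
    rw [Nat.choose_eq_zero_of_lt this, Nat.cast_zero, zero_smul]
  rw [← h2, h3]
  rw [show (1 : TruncV p) - xV p = -xV p + 1 by ring, add_pow]
  refine Finset.sum_congr rfl fun k _ => ?_
  rw [one_pow, mul_one, mul_comm,
    show ((m.choose k : TruncV p)) = algebraMap ℚ_[p] (TruncV p) (m.choose k : ℚ_[p]) from by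
      rw [map_natCast], ← Algebra.smul_def]

lemma log_pow_nat (m q : ℕ) (hq : q + 1 = p) :
    ∑ n ∈ range q, ((n : ℚ_[p]) + 1)⁻¹ • (1 - (1 - xV p) ^ m) ^ (n + 1)
      = (m : ℚ_[p]) • ∑ j ∈ range q, ((j : ℚ_[p]) + 1)⁻¹ • (xV p) ^ (j + 1) := by
  have hdvd := key_dvd ℚ_[p] m q
  rw [hq] at hdvd
  have h0 : mkV p ((∑ n ∈ range q, C (((n : ℚ_[p]) + 1)⁻¹) * (1 - (1 - X) ^ m) ^ (n + 1))
      - C (m : ℚ_[p]) * ∑ j ∈ range q, C (((j : ℚ_[p]) + 1)⁻¹) * X ^ (j + 1)) = 0 :=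
    Ideal.Quotient.eq_zero_iff_mem.mpr (Ideal.mem_span_singleton.mpr hdvd)
  rw [map_sub, sub_eq_zero, mkV_C_mul] at h0
  have e1 : mkV p (∑ n ∈ range q, C (((n : ℚ_[p]) + 1)⁻¹) * (1 - (1 - X) ^ m) ^ (n + 1))
      = ∑ n ∈ range q, ((n : ℚ_[p]) + 1)⁻¹ • (1 - (1 - xV p) ^ m) ^ (n + 1) := by
    rw [map_sum]
    refine Finset.sum_congr rfl fun n _ => ?_
    rw [mkV_C_mul, map_pow, map_sub, map_one, map_pow, map_sub, map_one, mkV_X]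
  have e2 : mkV p (∑ j ∈ range q, C (((j : ℚ_[p]) + 1)⁻¹) * X ^ (j + 1))
      = ∑ j ∈ range q, ((j : ℚ_[p]) + 1)⁻¹ • (xV p) ^ (j + 1) := by
    rw [map_sum]
    refine Finset.sum_congr rfl fun j _ => ?_
    rw [mkV_C_mul, map_pow, mkV_X]
  rw [e1, e2] at h0
  exact h0
section Part3
variable (p : ℕ) [Fact p.Prime]

noncomputable def VB : PowerBasis ℚ_[p] (TruncV p) :=
  AdjoinRoot.powerBasis' (monic_X_pow p (R := ℚ_[p]))

theorem VB_dim : (VB p).dim = p := by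
  rw [VB, AdjoinRoot.powerBasis'_dim, natDegree_X_pow]

theorem VB_gen : (VB p).gen = xV p := by
  rw [VB, AdjoinRoot.powerBasis'_gen]; rfl

theorem VB_basis_eq (i : Fin (VB p).dim) : (VB p).basis i = xV p ^ (i : ℕ) := by
  rw [(VB p).basis_eq_pow, VB_gen]

theorem finrank_TruncV : Module.finrank ℚ_[p] (TruncV p) = p := by
  rw [(VB p).finrank, VB_dim]

instance : Module.Finite ℚ_[p] (TruncV p) := Module.Finite.of_basis (VB p).basis

noncomputable def yV : TruncV p :=
  ∑ j ∈ Finset.range (p - 1), ((j : ℚ_[p]) + 1)⁻¹ • xV p ^ (j + 1)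

noncomputable def bpoly (n : ℕ) : ℚ_[p][X] :=
  descPochhammer ℚ_[p] n * C ((n.factorial : ℚ_[p])⁻¹)

lemma bpoly_eval (a : ℚ_[p]) (n : ℕ) : (bpoly p n).eval a = pbinom p a n := by
  rw [bpoly, eval_mul, eval_C, pbinom, div_eq_mul_inv]

noncomputable def phiP : Polynomial (TruncV p) :=
  C 1 - ∑ n ∈ Finset.range p,
    (bpoly p n).map (algebraMap ℚ_[p] (TruncV p)) * C ((-xV p) ^ n)

lemma phiP_eval (a : ℚ_[p]) :
    (phiP p).eval (algebraMap ℚ_[p] (TruncV p) a) = phiImg p a := by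
  rw [phiP, eval_sub, eval_C, eval_finset_sum, phiImg]
  congr 1
  refine Finset.sum_congr rfl fun n _ => ?_
  rw [eval_mul, eval_C, eval_map, eval₂_at_apply, bpoly_eval, ← Algebra.smul_def]

noncomputable def FP : Polynomial (TruncV p) :=
  (∑ n ∈ Finset.range (p - 1),
    C (algebraMap ℚ_[p] (TruncV p) ((n : ℚ_[p]) + 1)⁻¹) * phiP p ^ (n + 1))
    - X * C (yV p)

lemma FP_eval (a : ℚ_[p]) :
    (FP p).eval (algebraMap ℚ_[p] (TruncV p) a)
      = (∑ n ∈ Finset.range (p - 1), ((n : ℚ_[p]) + 1)⁻¹ • (phiImg p a) ^ (n + 1))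
        - a • yV p := by
  rw [FP, eval_sub, eval_mul, eval_X, eval_C, eval_finset_sum, ← Algebra.smul_def]
  congr 1
  refine Finset.sum_congr rfl fun n _ => ?_
  rw [eval_mul, eval_C, eval_pow, phiP_eval, ← Algebra.smul_def]

lemma FP_nat (m : ℕ) : (FP p).eval (algebraMap ℚ_[p] (TruncV p) (m : ℚ_[p])) = 0 := by
  have hq : (p - 1) + 1 = p := by
    have := (Fact.out : p.Prime).pos; omega
  rw [FP_eval, phiImg_nat, log_pow_nat p m (p - 1) hq, yV, sub_self]

lemma FP_zero : FP p = 0 := by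
  apply Polynomial.ext
  intro j
  rw [coeff_zero, ← Module.forall_dual_apply_eq_zero_iff ℚ_[p]]
  intro ℓ
  set Q : ℚ_[p][X] := ∑ i ∈ (FP p).support, C (ℓ ((FP p).coeff i)) * X ^ i with hQ
  have hQe : ∀ a : ℚ_[p], Q.eval a
      = ℓ ((FP p).eval (algebraMap ℚ_[p] (TruncV p) a)) := by
    intro a
    have h1 : (FP p).eval (algebraMap ℚ_[p] (TruncV p) a)
        = ∑ i ∈ (FP p).support, (a ^ i) • (FP p).coeff i := by
      rw [Polynomial.eval_eq_sum, Polynomial.sum]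
      refine Finset.sum_congr rfl fun i _ => ?_
      rw [← map_pow, mul_comm, ← Algebra.smul_def]
    rw [h1, map_sum, hQ, eval_finset_sum]
    refine Finset.sum_congr rfl fun i _ => ?_
    rw [eval_mul, eval_C, eval_pow, eval_X, map_smul, smul_eq_mul, mul_comm]
  have hQ0 : Q = 0 := by
    refine Polynomial.eq_zero_of_infinite_isRoot _ ?_
    refine Set.infinite_of_injective_forall_mem
      (f := (Nat.cast : ℕ → ℚ_[p])) Nat.cast_injective ?_
    intro m
    show Q.IsRoot (m : ℚ_[p])
    rw [Polynomial.IsRoot, hQe, FP_nat, map_zero]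
  have hQc : Q.coeff j = ℓ ((FP p).coeff j) := by
    rw [hQ, finset_sum_coeff]
    simp only [coeff_C_mul, coeff_X_pow, mul_ite, mul_one, mul_zero]
    rw [Finset.sum_ite_eq (FP p).support j (fun i => ℓ ((FP p).coeff i))]
    split
    · rfl
    · rw [Polynomial.notMem_support_iff.mp ‹_›, map_zero]
  rw [← hQc, hQ0, coeff_zero]

lemma sum_phiImg_pow (a : ℚ_[p]) :
    ∑ n ∈ Finset.range (p - 1), ((n : ℚ_[p]) + 1)⁻¹ • (phiImg p a) ^ (n + 1)
      = a • yV p := by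
  have := FP_eval p a
  rw [FP_zero, eval_zero] at this
  exact sub_eq_zero.mp this.symm

end Part3
section Part4
variable (p : ℕ) [Fact p.Prime]

lemma xpow_ne_zero {k : ℕ} (hk : k < p) : xV p ^ k ≠ 0 := by
  have hk' : k < (VB p).dim := by rw [VB_dim]; exact hk
  have := (VB p).basis.ne_zero ⟨k, hk'⟩
  rwa [VB_basis_eq] at this

lemma yV_eq : yV p = xV p + xV p * (xV p *
    (∑ i ∈ Finset.range (p - 2), (((i : ℚ_[p]) + 1) + 1)⁻¹ • xV p ^ i)) := by
  have hp2 : 2 ≤ p := (Fact.out : p.Prime).two_le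
  have key : ∑ k ∈ Finset.range (p - 2), (((k + 1 : ℕ) : ℚ_[p]) + 1)⁻¹ • xV p ^ (k + 1 + 1)
      = xV p * (xV p * ∑ i ∈ Finset.range (p - 2), (((i : ℚ_[p]) + 1) + 1)⁻¹ • xV p ^ i) := by
    rw [Finset.mul_sum, Finset.mul_sum]
    refine Finset.sum_congr rfl fun i _ => ?_
    rw [mul_smul_comm, mul_smul_comm]
    have hc : (((i + 1 : ℕ) : ℚ_[p]) + 1)⁻¹ = (((i : ℚ_[p]) + 1) + 1)⁻¹ := by push_cast; ring_nf
    rw [hc]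
    congr 1
    rw [show i + 1 + 1 = 1 + (1 + i) by omega, pow_add, pow_add, pow_one]
  rw [yV, show p - 1 = (p - 2) + 1 by omega, Finset.sum_range_succ', key]
  norm_num
  ring

lemma yV_factor : yV p = xV p * (1 + xV p *
    (∑ i ∈ Finset.range (p - 2), (((i : ℚ_[p]) + 1) + 1)⁻¹ • xV p ^ i)) := by
  rw [yV_eq]; ring

lemma ypow_sub (k : ℕ) : ∃ c : TruncV p, yV p ^ k = xV p ^ k + xV p ^ (k + 1) * c := by
  obtain ⟨c0, hc0⟩ : ∃ c0, yV p = xV p * (1 + xV p * c0) := ⟨_, yV_factor p⟩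
  obtain ⟨e, he⟩ : ∃ e, (1 + xV p * c0) ^ k = 1 + (xV p * c0) * e := by
    have := sub_dvd_pow_sub_pow (1 + xV p * c0) 1 k
    rw [one_pow, add_sub_cancel_left] at this
    obtain ⟨e, he⟩ := this
    exact ⟨e, by linear_combination he⟩
  refine ⟨c0 * e, ?_⟩
  rw [hc0, mul_pow, he, pow_succ]
  ring

lemma ypow_ne_zero {k : ℕ} (hk : k < p) : yV p ^ k ≠ 0 := by
  obtain ⟨c0, hc0⟩ : ∃ c0, yV p = xV p * (1 + xV p * c0) := ⟨_, yV_factor p⟩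
  have hnil : IsNilpotent (xV p * c0) := ⟨p, by rw [mul_pow, xV_pow_p, zero_mul]⟩
  have hu : IsUnit (1 + xV p * c0) := hnil.isUnit_one_add
  intro h0
  apply xpow_ne_zero p hk
  have hyx : yV p ^ k = xV p ^ k * (1 + xV p * c0) ^ k := by rw [hc0, mul_pow]
  rw [h0] at hyx
  exact ((hu.pow k).mul_left_eq_zero).mp hyx.symm

/-- the span of the powers of `y` -/
noncomputable def SY : Submodule ℚ_[p] (TruncV p) :=
  Submodule.span ℚ_[p] (Set.range fun k : Fin p => yV p ^ (k : ℕ))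

noncomputable def MX (j : ℕ) : Submodule ℚ_[p] (TruncV p) :=
  Submodule.span ℚ_[p] ((fun i => xV p ^ i) '' {i | j ≤ i})

lemma MX_antitone {a b : ℕ} (hab : a ≤ b) : MX p b ≤ MX p a :=
  Submodule.span_mono (Set.image_mono fun i hi => le_trans hab hi)

lemma mul_mem_MX (j : ℕ) (z : TruncV p) : xV p ^ j * z ∈ MX p j := by
  have hz := (VB p).basis.sum_repr z
  rw [← hz, Finset.mul_sum]
  refine Submodule.sum_mem _ fun i _ => ?_
  rw [mul_smul_comm]
  refine Submodule.smul_mem _ _ (Submodule.subset_span ?_)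
  refine ⟨j + (i : ℕ), by simp, ?_⟩
  show xV p ^ (j + (i : ℕ)) = xV p ^ j * (VB p).basis i
  rw [pow_add, VB_basis_eq]

lemma MX_le_SY (t : ℕ) : MX p (p - t) ≤ SY p := by
  induction t with
  | zero =>
    rw [MX, Submodule.span_le]
    rintro _ ⟨i, hi, rfl⟩
    show xV p ^ i ∈ (SY p : Set (TruncV p))
    rw [xV_pow_eq_zero p (by simpa using hi)]
    exact Submodule.zero_mem _
  | succ t ih =>
    rcases Nat.eq_zero_or_pos (p - t) with h0 | hpos
    · exact le_trans (MX_antitone p (by omega)) ih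
    have hjp : p - (t + 1) < p := by have := (Fact.out : p.Prime).pos; omega
    have hj1 : p - t ≤ (p - (t + 1)) + 1 := by omega
    have hMj1 : MX p ((p - (t + 1)) + 1) ≤ SY p := le_trans (MX_antitone p hj1) ih
    rw [MX, Submodule.span_le]
    rintro _ ⟨i, hi, rfl⟩
    show xV p ^ i ∈ (SY p : Set (TruncV p))
    simp only [Set.mem_setOf_eq] at hi
    rcases eq_or_lt_of_le hi with heq | hlt
    · subst heq
      obtain ⟨c, hc⟩ := ypow_sub p (p - (t + 1))
      have hy : yV p ^ (p - (t + 1)) ∈ SY p :=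
        Submodule.subset_span ⟨⟨p - (t + 1), hjp⟩, rfl⟩
      have hx1 : xV p ^ ((p - (t + 1)) + 1) * c ∈ SY p := hMj1 (mul_mem_MX p _ c)
      have hxe : xV p ^ (p - (t + 1))
          = yV p ^ (p - (t + 1)) - xV p ^ ((p - (t + 1)) + 1) * c := by rw [hc]; ring
      rw [hxe]
      exact Submodule.sub_mem _ hy hx1
    · exact hMj1 (Submodule.subset_span ⟨i, hlt, rfl⟩)

lemma SY_top : SY p = ⊤ := by
  rw [eq_top_iff]
  intro z _
  have h0 : MX p 0 ≤ SY p := by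
    have := MX_le_SY p p
    simpa using this
  apply h0
  have := mul_mem_MX p 0 z
  simpa using this

end Part4
/-- `V = Λ_0 ⊕ Λ_1 ⊕ ⋯ ⊕ Λ_{p-2}` is the internal direct sum of the eigenspaces of the
Adams operation `ψ_ζ`, with `dim Λ_0 = 2` and `dim Λ_k = 1` for `1 ≤ k ≤ p-2`. -/
theorem eigenspace_direct_sum (p : ℕ) [Fact p.Prime] (hp : Odd p) (ζ : ℤ_[p])
    (hζ : ζ ^ (p - 1) = 1) (hord : orderOf ζ = p - 1)
    (Φ : TruncV p →ₐ[ℚ_[p]] TruncV p)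
    (hΦ : Φ (xV p) = phiImg p (ζ : ℚ_[p])) :
    DirectSum.IsInternal (fun k : Fin (p - 1) =>
        Module.End.eigenspace (Φ.toLinearMap) ((ζ : ℚ_[p]) ^ (k : ℕ))) ∧
    Module.finrank ℚ_[p]
      (Module.End.eigenspace (Φ.toLinearMap) ((ζ : ℚ_[p]) ^ (0 : ℕ))) = 2 ∧
    ∀ k : ℕ, 1 ≤ k → k ≤ p - 2 →
      Module.finrank ℚ_[p]
        (Module.End.eigenspace (Φ.toLinearMap) ((ζ : ℚ_[p]) ^ k)) = 1 := by
  have hp3 : 3 ≤ p := by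
    have h2 := (Fact.out : p.Prime).two_le
    have hne2 : p ≠ 2 := by
      rintro rfl
      exact (by decide : ¬ Odd 2) hp
    omega
  haveI : NeZero (p - 1) := ⟨by omega⟩
  set ζ' : ℚ_[p] := ((ζ : ℤ_[p]) : ℚ_[p]) with hζ'def
  have hζ' : ζ' ^ (p - 1) = 1 := by
    rw [hζ'def, ← PadicInt.coe_pow, hζ, PadicInt.coe_one]
  have hord' : orderOf ζ' = p - 1 := by
    rw [hζ'def, ← hord]
    exact orderOf_injective (PadicInt.Coe.ringHom (p := p)).toMonoidHom
      Subtype.coe_injective ζ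
  have hζne : ζ' ≠ 0 := by
    intro h
    rw [h] at hζ'
    simp [zero_pow (show p - 1 ≠ 0 by omega)] at hζ'
  -- Φ on y
  have hy : Φ (yV p) = ζ' • yV p := by
    have h1 : Φ (yV p)
        = ∑ n ∈ Finset.range (p - 1), ((n : ℚ_[p]) + 1)⁻¹ • (phiImg p ζ') ^ (n + 1) := by
      rw [yV, map_sum]
      refine Finset.sum_congr rfl fun n _ => ?_
      rw [map_smul, map_pow, hΦ]
    rw [h1, sum_phiImg_pow]
  have hyk : ∀ k : ℕ, Φ (yV p ^ k) = (ζ' ^ k) • (yV p ^ k) := fun k => by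
    rw [map_pow, hy, _root_.smul_pow]
  have hmemE : ∀ k : ℕ, yV p ^ k ∈ Module.End.eigenspace (Φ.toLinearMap) (ζ' ^ k) :=
    fun k => Module.End.mem_eigenspace_iff.mpr (hyk k)
  set A : Fin (p - 1) → Submodule ℚ_[p] (TruncV p) :=
    fun k => Module.End.eigenspace (Φ.toLinearMap) (ζ' ^ (k : ℕ)) with hA
  -- supremum is everything
  have hSup : ⨆ k, A k = ⊤ := by
    rw [eq_top_iff, ← SY_top p, SY, Submodule.span_le]
    rintro _ ⟨k, rfl⟩
    show yV p ^ (k : ℕ) ∈ (⨆ k, A k : Submodule ℚ_[p] (TruncV p)) 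
    rcases Nat.lt_or_ge (k : ℕ) (p - 1) with hk | hk
    · exact Submodule.mem_iSup_of_mem ⟨(k : ℕ), hk⟩ (hmemE (k : ℕ))
    · have hkp : (k : ℕ) = p - 1 := by have := k.isLt; omega
      refine Submodule.mem_iSup_of_mem 0 ?_
      show yV p ^ (k : ℕ) ∈ Module.End.eigenspace (Φ.toLinearMap) (ζ' ^ ((0 : Fin (p-1)) : ℕ))
      rw [Fin.val_zero, pow_zero, hkp]
      have := hmemE (p - 1)
      rw [hζ'] at this
      exact this
  -- independence
  have hkey : ∀ a b : Fin (p - 1), (a : ℕ) ≤ (b : ℕ) →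
      ζ' ^ (a : ℕ) = ζ' ^ (b : ℕ) → a = b := by
    intro a b hle hab
    have hpow : ζ' ^ ((b : ℕ) - (a : ℕ)) = 1 := by
      have hsplit : ζ' ^ (b : ℕ) = ζ' ^ (a : ℕ) * ζ' ^ ((b : ℕ) - (a : ℕ)) := by
        rw [← pow_add]
        congr 1
        omega
      rw [← hab] at hsplit
      have hzk : ζ' ^ (a : ℕ) ≠ 0 := pow_ne_zero _ hζne
      apply mul_left_cancel₀ hzk
      rw [mul_one, ← hsplit]
    have hdvd := orderOf_dvd_of_pow_eq_one hpow
    rw [hord'] at hdvd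
    have hblt : (b : ℕ) - (a : ℕ) < p - 1 := by have := b.isLt; omega
    have hz : (b : ℕ) - (a : ℕ) = 0 := Nat.eq_zero_of_dvd_of_lt hdvd hblt
    exact Fin.ext (by omega)
  have hinj : Function.Injective (fun k : Fin (p - 1) => ζ' ^ (k : ℕ)) := by
    intro a b hab
    simp only at hab
    rcases le_total (a : ℕ) (b : ℕ) with h | h
    · exact hkey a b h hab
    · exact (hkey b a h hab.symm).symm
  have hInd : iSupIndep A :=
    (Module.End.eigenspaces_iSupIndep (Φ.toLinearMap)).comp hinj
  have hInternal : DirectSum.IsInternal A :=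
    (DirectSum.isInternal_submodule_iff_iSupIndep_and_iSup_eq_top A).mpr ⟨hInd, hSup⟩
  -- dimension bookkeeping
  have hsum : ∑ k : Fin (p - 1), Module.finrank ℚ_[p] (A k) = p := by
    have e : (DirectSum (Fin (p - 1)) fun k => A k) ≃ₗ[ℚ_[p]] TruncV p :=
      LinearEquiv.ofBijective (DirectSum.coeLinearMap A) hInternal
    rw [← Module.finrank_directSum, e.finrank_eq, finrank_TruncV]
  -- Λ_0 has dimension ≥ 2
  have hxp1 : xV p ^ (p - 1) = yV p ^ (p - 1) := by
    obtain ⟨c, hc⟩ := ypow_sub p (p - 1)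
    rw [hc, show p - 1 + 1 = p by omega, xV_pow_p, zero_mul, add_zero]
  have h1mem : (1 : TruncV p) ∈ A 0 := by
    rw [hA]
    show (1 : TruncV p) ∈ Module.End.eigenspace (Φ.toLinearMap) (ζ' ^ ((0 : Fin (p-1)) : ℕ))
    rw [Fin.val_zero, pow_zero]
    exact Module.End.mem_eigenspace_iff.mpr (by rw [one_smul]; exact map_one Φ)
  have hxmem : xV p ^ (p - 1) ∈ A 0 := by
    rw [hA]
    show _ ∈ Module.End.eigenspace (Φ.toLinearMap) (ζ' ^ ((0 : Fin (p-1)) : ℕ))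
    rw [Fin.val_zero, pow_zero, hxp1, ← hζ']
    exact hmemE (p - 1)
  have hd0 : 2 ≤ Module.finrank ℚ_[p] (A 0) := by
    let v : Fin 2 → A 0 := ![⟨1, h1mem⟩, ⟨xV p ^ (p - 1), hxmem⟩]
    have hvli : LinearIndependent ℚ_[p] v := by
      apply LinearIndependent.of_comp (A 0).subtype
      let σ : Fin 2 → Fin (VB p).dim :=
        ![⟨0, by rw [VB_dim]; omega⟩, ⟨p - 1, by rw [VB_dim]; omega⟩]
      have hσ : Function.Injective σ := by
        intro a b hab
        fin_cases a <;> fin_cases b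
        · rfl
        · exfalso; have hv := congrArg Fin.val hab; simp [σ] at hv; omega
        · exfalso; have hv := congrArg Fin.val hab; simp [σ] at hv; omega
        · rfl
      have hli := (VB p).basis.linearIndependent.comp σ hσ
      have heq : ((A 0).subtype ∘ v) = ((VB p).basis ∘ σ) := by
        funext i
        fin_cases i <;> simp [v, σ, VB_basis_eq, VB_gen]
      rw [heq]
      exact hli
    have := hvli.fintype_card_le_finrank
    simpa using this
  -- each Λ_k nontrivial
  have hd1 : ∀ k : Fin (p - 1), 1 ≤ Module.finrank ℚ_[p] (A k) := by
    intro k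
    have hne : A k ≠ ⊥ := by
      intro hbot
      have hmem := hmemE (k : ℕ)
      have : yV p ^ (k : ℕ) = 0 := by
        rw [hA] at hbot
        rw [← Submodule.mem_bot (R := ℚ_[p]), ← hbot]
        exact hmem
      exact ypow_ne_zero p (by have := k.isLt; omega) this
    have : Module.finrank ℚ_[p] (A k) ≠ 0 := by
      intro h0
      exact hne (Submodule.finrank_eq_zero.mp h0)
    omega
  -- pin down all dimensions
  set L : Fin (p - 1) → ℕ := fun k => if k = 0 then 2 else 1 with hLdef
  have hLsum : ∑ k : Fin (p - 1), L k = p := by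
    have hsplit : ∀ k : Fin (p - 1), L k = 1 + (if k = 0 then 1 else 0) := by
      intro k
      rw [hLdef]
      by_cases h : k = 0 <;> simp [h]
    rw [Finset.sum_congr rfl (fun k _ => hsplit k), Finset.sum_add_distrib,
      Finset.sum_const, Finset.sum_ite_eq' Finset.univ (0 : Fin (p - 1)) (fun _ => 1)]
    simp only [Finset.card_univ, Fintype.card_fin, smul_eq_mul, mul_one,
      Finset.mem_univ, if_true]
    omega
  have hle : ∀ k ∈ Finset.univ, L k ≤ Module.finrank ℚ_[p] (A k) := by
    intro k _
    by_cases h : k = 0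
    · subst h
      simpa [hLdef] using hd0
    · simpa [hLdef, h] using hd1 k
  have hall : ∀ k ∈ Finset.univ, L k = Module.finrank ℚ_[p] (A k) :=
    (Finset.sum_eq_sum_iff_of_le hle).mp (by rw [hLsum, hsum])
  refine ⟨hInternal, ?_, ?_⟩
  · have hconv : A 0 = Module.End.eigenspace (Φ.toLinearMap) (ζ' ^ (0 : ℕ)) := by
      show Module.End.eigenspace (Φ.toLinearMap) (ζ' ^ ((0 : Fin (p - 1)) : ℕ)) = _
      rw [Fin.val_zero]
    rw [← hconv, ← hall 0 (Finset.mem_univ _), hLdef]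
    simp
  · intro k hk1 hk2
    have hkf : k < p - 1 := by omega
    have hconv : A ⟨k, hkf⟩ = Module.End.eigenspace (Φ.toLinearMap) (ζ' ^ k) := rfl
    rw [← hconv, ← hall ⟨k, hkf⟩ (Finset.mem_univ _), hLdef]
    have : (⟨k, hkf⟩ : Fin (p - 1)) ≠ 0 := by
      intro h
      have := congrArg Fin.val h
      simp at this
      omega
    simp [this]
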